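/- Let U ⊆ ℂ be open and p : U → M_n(ℂ) holomorphic with p(z) invertible for every z ∈ U. Then the real-valued function φ(z) := tr(p(z)* p(z)) + tr((p(z)* p(z))⁻¹) is subharmonic on U in the sense of the sub-mean value inequality: for every c ∈ U and R > 0 with the closed disk {z : |z − c| ≤ R} contained in U, φ(c) ≤ (1/2π) ∫₀^{2π} φ(c + R e^{iθ}) dθ. -/

import Mathlib

attribute [local instance] Matrix.normedAddCommGroup Matrix.normedSpace

open Matrix Metric Real

private lemma entry_diffOn {n : ℕ} {U : Set ℂ} {p : ℂ → Matrix (Fin n) (Fin n) ℂ}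
    (hhol : DifferentiableOn ℂ p U) (i j : Fin n) :
    DifferentiableOn ℂ (fun z => p z i j) U :=
  (differentiableOn_pi.mp ((differentiableOn_pi.mp hhol) i)) j

private lemma det_diffOn {n : ℕ} {U : Set ℂ} {A : ℂ → Matrix (Fin n) (Fin n) ℂ}
    (h : ∀ i j, DifferentiableOn ℂ (fun z => A z i j) U) :
    DifferentiableOn ℂ (fun z => (A z).det) U := by
  have e : (fun z => (A z).det)
      = fun z => ∑ σ : Equiv.Perm (Fin n), ((Equiv.Perm.sign σ : ℤ) : ℂ) * ∏ i, A z (σ i) i := by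
    funext z; rw [Matrix.det_apply']
  rw [e]
  apply DifferentiableOn.fun_sum
  intro σ _
  exact (DifferentiableOn.fun_finset_prod (fun i _ => h (σ i) i)).const_mul _

private lemma inv_entry_diffOn {n : ℕ} {U : Set ℂ} {p : ℂ → Matrix (Fin n) (Fin n) ℂ}
    (hhol : DifferentiableOn ℂ p U) (hinv : ∀ z ∈ U, IsUnit (p z)) (i j : Fin n) :
    DifferentiableOn ℂ (fun z => (p z)⁻¹ i j) U := by
  have hdet : DifferentiableOn ℂ (fun z => (p z).det) U := det_diffOn (entry_diffOn hhol)
  have hne : ∀ z ∈ U, (p z).det ≠ 0 := fun z hz =>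
    ((Matrix.isUnit_iff_isUnit_det _).mp (hinv z hz)).ne_zero
  have hadj : DifferentiableOn ℂ (fun z => (p z).adjugate i j) U := by
    have e : (fun z => (p z).adjugate i j)
        = fun z => ((p z).updateRow j (Pi.single i 1)).det := by
      funext z; rw [Matrix.adjugate_apply]
    rw [e]
    apply det_diffOn
    intro k l
    by_cases hk : k = j
    · simp only [Matrix.updateRow_apply, if_pos hk]
      exact differentiableOn_const _
    · simp only [Matrix.updateRow_apply, if_neg hk]
      exact entry_diffOn hhol k l
  have e : (fun z => (p z)⁻¹ i j) = fun z => ((p z).det)⁻¹ * (p z).adjugate i j := by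
    funext z
    rw [Matrix.inv_def, Ring.inverse_eq_inv]
    simp [Matrix.smul_apply, smul_eq_mul]
  rw [e]
  exact (hdet.inv hne).mul hadj

private lemma circle_cont {f : ℂ → ℂ} {c : ℂ} {R : ℝ} (hR : 0 ≤ R)
    (hcont : ContinuousOn f (closedBall c R)) :
    Continuous fun θ : ℝ => f (circleMap c R θ) := by
  rw [← continuousOn_univ]
  exact hcont.comp (continuous_circleMap c R).continuousOn
    (fun θ _ => circleMap_mem_closedBall c hR θ)

private lemma submean {f : ℂ → ℂ} {U : Set ℂ} (hf : DifferentiableOn ℂ f U)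
    {c : ℂ} {R : ℝ} (hR : 0 < R) (hsub : closedBall c R ⊆ U) :
    Complex.normSq (f c) ≤
      (1 / (2 * π)) * ∫ θ in (0:ℝ)..(2 * π), Complex.normSq (f (circleMap c R θ)) := by
  have hπ : (0:ℝ) < 2 * π := by positivity
  have hcont : ContinuousOn f (closedBall c R) := hf.continuousOn.mono hsub
  have hgc : Continuous fun θ : ℝ => f (circleMap c R θ) := circle_cont hR.le hcont
  set g : ℝ → ℝ := fun θ => ‖f (circleMap c R θ)‖ with hg
  have hgcont : Continuous g := continuous_norm.comp hgc
  have hgi : IntervalIntegrable g MeasureTheory.volume 0 (2*π) :=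
    hgcont.intervalIntegrable _ _
  have hg2i : IntervalIntegrable (fun θ => g θ ^ 2) MeasureTheory.volume 0 (2*π) :=
    (hgcont.pow 2).intervalIntegrable _ _
  -- mean value property
  have hdc : DiffContOnCl ℂ f (ball c R) := by
    have h1 := hf.mono hsub
    rw [← closure_ball c hR.ne'] at h1
    exact h1.diffContOnCl
  have key := hdc.circleIntegral_sub_inv_smul (mem_ball_self hR)
  rw [circleIntegral] at key
  simp only [deriv_circleMap, circleMap_sub_center, smul_eq_mul] at key
  have hzne : ∀ θ : ℝ, circleMap 0 R θ ≠ 0 := fun θ => circleMap_ne_center hR.ne'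
  have e1 : (fun θ : ℝ => circleMap 0 R θ * Complex.I *
      ((circleMap 0 R θ)⁻¹ * f (circleMap c R θ)))
      = fun θ => Complex.I * f (circleMap c R θ) := by
    funext θ
    field_simp [hzne θ]
  rw [e1, intervalIntegral.integral_const_mul] at key
  have hmean : (∫ θ in (0:ℝ)..(2*π), f (circleMap c R θ)) = ((2*π : ℝ) : ℂ) * f c := by
    apply mul_left_cancel₀ Complex.I_ne_zero
    rw [key]; push_cast; ring
  set a : ℝ := ∫ θ in (0:ℝ)..(2*π), g θ with ha
  have habs : (2*π) * ‖f c‖ ≤ a := by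
    have h1 : ‖((2*π : ℝ) : ℂ) * f c‖ = (2*π) * ‖f c‖ := by
      rw [norm_mul, Complex.norm_real, Real.norm_of_nonneg hπ.le]
    calc (2*π) * ‖f c‖ = ‖∫ θ in (0:ℝ)..(2*π), f (circleMap c R θ)‖ := by
          rw [hmean, h1]
      _ ≤ a := by
          simpa [hg] using intervalIntegral.norm_integral_le_integral_norm (a := (0:ℝ))
            (b := 2*π) (f := fun θ => f (circleMap c R θ)) hπ.le
  set b : ℝ := ∫ θ in (0:ℝ)..(2*π), g θ ^ 2 with hb
  have hcs : a ^ 2 ≤ (2*π) * b := by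
    set m : ℝ := a / (2*π) with hm
    have h0 : 0 ≤ ∫ θ in (0:ℝ)..(2*π), (g θ - m)^2 :=
      intervalIntegral.integral_nonneg hπ.le (fun θ _ => sq_nonneg _)
    have hexp : (fun θ => (g θ - m)^2) = fun θ => (g θ^2 - 2*m*g θ) + m^2 := by
      funext θ; ring
    rw [hexp, intervalIntegral.integral_add (hg2i.sub (hgi.const_mul _)) intervalIntegrable_const,
      intervalIntegral.integral_sub hg2i (hgi.const_mul _),
      intervalIntegral.integral_const_mul, intervalIntegral.integral_const] at h0
    simp only [smul_eq_mul, sub_zero, ← ha, ← hb] at h0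
    have hma : a = 2 * π * m := by rw [hm]; field_simp
    rw [hma] at h0 ⊢
    nlinarith [h0, hπ, sq_nonneg m]
  have h4 : 0 ≤ ‖f c‖ := norm_nonneg _
  have h5 : Complex.normSq (f c) = ‖f c‖ ^ 2 := (Complex.sq_norm _).symm
  have h6 : (fun θ => Complex.normSq (f (circleMap c R θ))) = fun θ => g θ ^ 2 := by
    funext θ; rw [hg]; exact (Complex.sq_norm _).symm
  rw [h5, h6, ← hb]
  have h7 : (2*π*‖f c‖)^2 ≤ a^2 :=
    pow_le_pow_left₀ (by positivity) habs 2
  have h8 : ‖f c‖^2 * (2*π) ≤ b := by nlinarith [h7, hcs, hπ]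
  rw [show (1/(2*π))*b = b/(2*π) by ring]
  exact (le_div_iff₀ hπ).mpr h8

private lemma trace_conj_re {n : ℕ} (A : Matrix (Fin n) (Fin n) ℂ) :
    (Matrix.trace (Aᴴ * A)).re = ∑ i : Fin n, ∑ j : Fin n, Complex.normSq (A i j) := by
  simp only [Matrix.trace, Matrix.diag, Matrix.mul_apply, Matrix.conjTranspose_apply]
  rw [Complex.re_sum]
  rw [Finset.sum_comm]
  refine Finset.sum_congr rfl fun i _ => ?_
  rw [Complex.re_sum]
  refine Finset.sum_congr rfl fun j _ => ?_
  rw [Complex.star_def, mul_comm, Complex.mul_conj]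
  simp

private lemma trace_inv_re {n : ℕ} (A : Matrix (Fin n) (Fin n) ℂ) :
    (Matrix.trace ((Aᴴ * A)⁻¹)).re = ∑ i : Fin n, ∑ j : Fin n, Complex.normSq (A⁻¹ i j) := by
  rw [Matrix.mul_inv_rev, ← Matrix.conjTranspose_nonsing_inv, Matrix.trace_mul_comm,
    trace_conj_re]

/-- For a holomorphic family `p` of invertible matrices,
`φ(z) = tr(p(z)* p(z)) + tr((p(z)* p(z))⁻¹)` is subharmonic: it satisfies the sub-mean
value inequality on every closed disk contained in the domain. -/
theorem trace_plus_trace_inv_subharmonic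
    {n : ℕ} (hn : 1 ≤ n) (U : Set ℂ) (hU : IsOpen U)
    (p : ℂ → Matrix (Fin n) (Fin n) ℂ)
    (hhol : DifferentiableOn ℂ p U)
    (hinv : ∀ z ∈ U, IsUnit (p z)) :
    ∀ c ∈ U, ∀ R : ℝ, 0 < R → closedBall c R ⊆ U →
      (Matrix.trace ((p c)ᴴ * p c)).re + (Matrix.trace (((p c)ᴴ * p c)⁻¹)).re ≤
        (1 / (2 * π)) * ∫ θ in (0:ℝ)..(2 * π),
          ((Matrix.trace ((p (c + R * Complex.exp (θ * Complex.I)))ᴴ *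
              p (c + R * Complex.exp (θ * Complex.I)))).re +
            (Matrix.trace (((p (c + R * Complex.exp (θ * Complex.I)))ᴴ *
              p (c + R * Complex.exp (θ * Complex.I)))⁻¹)).re) := by
  intro c hc R hR hball
  have hcm : ∀ θ : ℝ, c + (R:ℂ) * Complex.exp ((θ:ℂ) * Complex.I) = circleMap c R θ :=
    fun θ => rfl
  simp only [hcm]
  have hpe : ∀ i j, DifferentiableOn ℂ (fun z => p z i j) U := entry_diffOn hhol
  have hqe : ∀ i j, DifferentiableOn ℂ (fun z => (p z)⁻¹ i j) U := inv_entry_diffOn hhol hinv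
  have hconta : ∀ i j : Fin n, Continuous fun θ : ℝ => Complex.normSq (p (circleMap c R θ) i j) :=
    fun i j => Complex.continuous_normSq.comp
      (circle_cont hR.le (((hpe i j).continuousOn).mono hball))
  have hcontb : ∀ i j : Fin n,
      Continuous fun θ : ℝ => Complex.normSq ((p (circleMap c R θ))⁻¹ i j) :=
    fun i j => Complex.continuous_normSq.comp
      (circle_cont hR.le (((hqe i j).continuousOn).mono hball))
  have hInta : ∀ i j : Fin n, IntervalIntegrable
      (fun θ => Complex.normSq (p (circleMap c R θ) i j)) MeasureTheory.volume 0 (2*π) :=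
    fun i j => (hconta i j).intervalIntegrable _ _
  have hIntb : ∀ i j : Fin n, IntervalIntegrable
      (fun θ => Complex.normSq ((p (circleMap c R θ))⁻¹ i j)) MeasureTheory.volume 0 (2*π) :=
    fun i j => (hcontb i j).intervalIntegrable _ _
  have htr : ∀ z : ℂ, (Matrix.trace ((p z)ᴴ * p z)).re + (Matrix.trace (((p z)ᴴ * p z)⁻¹)).re
      = ∑ i : Fin n, ∑ j : Fin n,
          (Complex.normSq (p z i j) + Complex.normSq ((p z)⁻¹ i j)) := by
    intro z
    rw [trace_conj_re, trace_inv_re, ← Finset.sum_add_distrib]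
    exact Finset.sum_congr rfl fun i _ => (Finset.sum_add_distrib).symm
  simp only [htr]
  have e2 : (∫ θ in (0:ℝ)..(2*π), ∑ i : Fin n, ∑ j : Fin n,
        (Complex.normSq (p (circleMap c R θ) i j)
          + Complex.normSq ((p (circleMap c R θ))⁻¹ i j)))
      = ∑ i : Fin n, ∑ j : Fin n,
        ((∫ θ in (0:ℝ)..(2*π), Complex.normSq (p (circleMap c R θ) i j))
          + ∫ θ in (0:ℝ)..(2*π), Complex.normSq ((p (circleMap c R θ))⁻¹ i j)) := by
    rw [intervalIntegral.integral_finset_sum (f := fun i θ => ∑ j : Fin n,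
        (Complex.normSq (p (circleMap c R θ) i j)
          + Complex.normSq ((p (circleMap c R θ))⁻¹ i j))) (fun i _ =>
      ((continuous_finset_sum Finset.univ fun j _ =>
        (hconta i j).add (hcontb i j)).intervalIntegrable _ _))]
    refine Finset.sum_congr rfl fun i _ => ?_
    rw [intervalIntegral.integral_finset_sum (f := fun j θ =>
        (Complex.normSq (p (circleMap c R θ) i j)
          + Complex.normSq ((p (circleMap c R θ))⁻¹ i j))) (fun j _ =>
      ((hconta i j).add (hcontb i j)).intervalIntegrable _ _)]
    refine Finset.sum_congr rfl fun j _ => ?_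
    exact intervalIntegral.integral_add (hInta i j) (hIntb i j)
  rw [e2, Finset.mul_sum]
  refine Finset.sum_le_sum fun i _ => ?_
  rw [Finset.mul_sum]
  refine Finset.sum_le_sum fun j _ => ?_
  rw [mul_add]
  exact add_le_add (submean (hpe i j) hR hball) (submean (hqe i j) hR hball)
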